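/- Let H be a separable infinite-dimensional complex Hilbert space, let E be a complex inner product space of finite dimension N ≥ 1, and let (ψ_n, φ_n)_{n ∈ ℕ} (with ψ_n ∈ H, φ_n ∈ E) be an orthonormal (Hilbert) basis of H × E with the product inner product. Let Θ ⊆ ℕ be a finite set of cardinality N and suppose the family (φ_n)_{n ∈ Θ} is linearly independent in E (hence a basis of E). Then there exists a unique continuous linear map T : H → E such that ⟨T y, φ_n⟩_E = −⟨y, ψ_n⟩_H for every y ∈ H and every n ∈ Θ; moreover, this map satisfies T ψ_m = φ_m for every m ∈ ℕ∖Θ. -/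

import Mathlib

open scoped InnerProductSpace

/-- If `(φ n)_{n ∈ Θ}` is linearly independent (hence a basis of `E`), then there is
a unique continuous linear map `T : H → E` with `⟪T y, φ n⟫ = -⟪y, ψ n⟫` for all `y ∈ H`,
`n ∈ Θ`; moreover this map satisfies `T (ψ m) = φ m` for all `m ∉ Θ`. -/
theorem stmt_3
    {H : Type*} [NormedAddCommGroup H] [InnerProductSpace ℂ H] [CompleteSpace H]
    [TopologicalSpace.SeparableSpace H] (hH : ¬ FiniteDimensional ℂ H)
    {E : Type*} [NormedAddCommGroup E] [InnerProductSpace ℂ E] [FiniteDimensional ℂ E]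
    (N : ℕ) (hN : 1 ≤ N) (hE : Module.finrank ℂ E = N)
    (ψ : ℕ → H) (φ : ℕ → E)
    (hON : Orthonormal ℂ (fun n : ℕ => (WithLp.equiv 2 (H × E)).symm (ψ n, φ n)))
    (hTotal : (Submodule.span ℂ
        (Set.range (fun n : ℕ => (WithLp.equiv 2 (H × E)).symm (ψ n, φ n)))).topologicalClosure
      = ⊤)
    (Θ : Finset ℕ) (hΘ : Θ.card = N)
    (hLI : LinearIndependent ℂ (fun n : Θ => φ n)) :
    (∃! T : H →L[ℂ] E, ∀ y : H, ∀ n ∈ Θ, ⟪T y, φ n⟫_ℂ = -⟪y, ψ n⟫_ℂ) ∧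
      ∀ T : H →L[ℂ] E, (∀ y : H, ∀ n ∈ Θ, ⟪T y, φ n⟫_ℂ = -⟪y, ψ n⟫_ℂ) →
        ∀ m ∉ Θ, T (ψ m) = φ m := by
  classical
  have hne : Θ.Nonempty := Finset.card_pos.mp (by omega)
  have : Nonempty Θ := ⟨⟨hne.choose, hne.choose_spec⟩⟩
  have hcard : Fintype.card Θ = Module.finrank ℂ E := by
    simp [Fintype.card_coe, hΘ, hE]
  let b : Module.Basis Θ ℂ E := basisOfLinearIndependentOfCardEqFinrank hLI hcard
  have hb : ∀ n : Θ, b n = φ n := fun n => by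
    simp [b, coe_basisOfLinearIndependentOfCardEqFinrank hLI hcard]
  -- the linear map v ↦ (⟪φ n, v⟫)_{n ∈ Θ}
  let L : E →ₗ[ℂ] (Θ → ℂ) :=
    LinearMap.pi (fun n : Θ => ((innerSL ℂ (φ (n : ℕ))) : E →L[ℂ] ℂ).toLinearMap)
  have hL : ∀ (v : E) (n : Θ), L v n = ⟪φ (n : ℕ), v⟫_ℂ := fun _ _ => rfl
  have hinj : Function.Injective L := by
    intro v w h
    refine InnerProductSpace.ext_inner_left_basis b fun i => ?_
    rw [hb]
    have := congrFun h i
    rwa [hL, hL] at this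
  have hdim : Module.finrank ℂ E = Module.finrank ℂ (Θ → ℂ) := by
    simp [Module.finrank_pi, Fintype.card_coe, hΘ, hE]
  let Leq : E ≃ₗ[ℂ] (Θ → ℂ) := L.linearEquivOfInjective hinj hdim
  have hLeq : ∀ z : Θ → ℂ, L (Leq.symm z) = z := fun z => by
    have : Leq (Leq.symm z) = z := Leq.apply_symm_apply z
    rw [← LinearMap.linearEquivOfInjective_apply hinj hdim]; exact this
  let S : H →L[ℂ] (Θ → ℂ) :=
    ContinuousLinearMap.pi (fun n : Θ => -(innerSL ℂ (ψ (n : ℕ))))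
  let T0 : (Θ → ℂ) →L[ℂ] E := LinearMap.toContinuousLinearMap (Leq.symm : (Θ → ℂ) →ₗ[ℂ] E)
  let T : H →L[ℂ] E := T0.comp S
  have hT : ∀ y : H, ∀ n ∈ Θ, ⟪T y, φ n⟫_ℂ = -⟪y, ψ n⟫_ℂ := by
    intro y n hn
    have h1 : ⟪φ n, T y⟫_ℂ = -⟪ψ n, y⟫_ℂ := by
      have : L (Leq.symm (S y)) ⟨n, hn⟩ = S y ⟨n, hn⟩ := congrFun (hLeq (S y)) ⟨n, hn⟩
      rw [hL] at this
      simpa [T, T0, S] using this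
    calc ⟪T y, φ n⟫_ℂ = starRingEnd ℂ ⟪φ n, T y⟫_ℂ := (inner_conj_symm _ _).symm
      _ = starRingEnd ℂ (-⟪ψ n, y⟫_ℂ) := by rw [h1]
      _ = -⟪y, ψ n⟫_ℂ := by rw [map_neg, inner_conj_symm]
  -- uniqueness
  have huniq : ∀ T' : H →L[ℂ] E,
      (∀ y : H, ∀ n ∈ Θ, ⟪T' y, φ n⟫_ℂ = -⟪y, ψ n⟫_ℂ) → T' = T := by
    intro T' hT'
    ext y
    refine InnerProductSpace.ext_inner_right_basis b fun i => ?_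
    rw [hb, hT' y i i.2, hT y i i.2]
  refine ⟨⟨T, hT, huniq⟩, ?_⟩
  -- moreover part
  intro T' hT' m hm
  refine InnerProductSpace.ext_inner_left_basis b fun i => ?_
  rw [hb]
  have hne' : (i : ℕ) ≠ m := fun h => hm (h ▸ i.2)
  have horth := hON.2 hne'
  simp only [WithLp.prod_inner_apply, WithLp.equiv_symm_apply, WithLp.ofLp_toLp] at horth
  -- horth : ⟪ψ i, ψ m⟫ + ⟪φ i, φ m⟫ = 0
  have h1 : ⟪φ (i : ℕ), T' (ψ m)⟫_ℂ = -⟪ψ (i : ℕ), ψ m⟫_ℂ := by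
    have := hT' (ψ m) i i.2
    calc ⟪φ (i : ℕ), T' (ψ m)⟫_ℂ = starRingEnd ℂ ⟪T' (ψ m), φ (i : ℕ)⟫_ℂ :=
          (inner_conj_symm _ _).symm
      _ = starRingEnd ℂ (-⟪ψ m, ψ (i : ℕ)⟫_ℂ) := by rw [this]
      _ = -⟪ψ (i : ℕ), ψ m⟫_ℂ := by rw [map_neg, inner_conj_symm]
  rw [h1]
  linear_combination -horth
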